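/- arXiv:1409.2582 — 5 statements merged into one kernel-verified Lean document; each statement's English description precedes it below -/
import Mathlib

section
/- For every real ρ with 0 ≤ ρ < 1 and every real θ₁, (1/(2π)) · ∫_{-π}^{π} (1 − ρ²)/((ρ² + 1) − 2ρ·cos(θ − θ₁)) dθ = 1; the value of this integral is independent of ρ. -/
open Real Filter intervalIntegral

/-- A global antiderivative of the Poisson kernel: the derivative of
`y ↦ y + 2 arctan (ρ sin y / (1 - ρ cos y))` is the Poisson kernel. -/
lemma poisson_hasDerivAt (ρ : ℝ) (hρ0 : 0 ≤ ρ) (hρ1 : ρ < 1) (x : ℝ) :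
    HasDerivAt (fun y => y + 2 * Real.arctan (ρ * Real.sin y / (1 - ρ * Real.cos y)))
      ((1 - ρ ^ 2) / ((ρ ^ 2 + 1) - 2 * ρ * Real.cos x)) x := by
  have hcos := Real.neg_one_le_cos x
  have hcos' := Real.cos_le_one x
  have hsin := Real.sin_sq_add_cos_sq x
  have hden : (0:ℝ) < 1 - ρ * Real.cos x := by nlinarith
  have hden' : (1:ℝ) - ρ * Real.cos x ≠ 0 := ne_of_gt hden
  have hD : (0:ℝ) < (ρ ^ 2 + 1) - 2 * ρ * Real.cos x := by nlinarith
  have hnum : HasDerivAt (fun y => ρ * Real.sin y) (ρ * Real.cos x) x :=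
    (Real.hasDerivAt_sin x).const_mul ρ
  have hd : HasDerivAt (fun y => 1 - ρ * Real.cos y) (ρ * Real.sin x) x := by
    have := ((Real.hasDerivAt_cos x).const_mul ρ).const_sub 1
    simpa using this
  have hu : HasDerivAt (fun y => ρ * Real.sin y / (1 - ρ * Real.cos y))
      ((ρ * Real.cos x * (1 - ρ * Real.cos x) - ρ * Real.sin x * (ρ * Real.sin x)) /
        (1 - ρ * Real.cos x) ^ 2) x := hnum.div hd hden'
  have ha : HasDerivAt Real.arctan
      (1 / (1 + (ρ * Real.sin x / (1 - ρ * Real.cos x)) ^ 2))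
      (ρ * Real.sin x / (1 - ρ * Real.cos x)) := Real.hasDerivAt_arctan _
  have h := (hasDerivAt_id x).add ((ha.comp x hu).const_mul 2)
  have hnum2 : ρ * Real.cos x * (1 - ρ * Real.cos x) - ρ * Real.sin x * (ρ * Real.sin x)
      = ρ * Real.cos x - ρ ^ 2 := by nlinarith
  have h1u : 1 + (ρ * Real.sin x / (1 - ρ * Real.cos x)) ^ 2
      = ((ρ ^ 2 + 1) - 2 * ρ * Real.cos x) / (1 - ρ * Real.cos x) ^ 2 := by
    field_simp
    nlinarith
  rw [hnum2, h1u] at h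
  have h' : HasDerivAt (fun y => y + 2 * Real.arctan (ρ * Real.sin y / (1 - ρ * Real.cos y))) _ x := h
  convert h' using 1
  have hD' := hD.ne'
  rw [one_div_div, div_mul_div_comm, mul_comm ((1 - ρ * cos x) ^ 2) _,
    mul_div_mul_right _ _ (pow_ne_zero 2 hden'), div_eq_iff hD', add_mul, mul_assoc (2:ℝ) ((ρ * cos x - ρ ^ 2) / _),
    div_mul_cancel₀ _ hD']
  ring

/-- The Poisson kernel integrates to one: for every `0 ≤ ρ < 1` and every `θ₁`,
`(1/(2π)) ∫_{-π}^{π} (1 − ρ²)/((ρ² + 1) − 2ρ cos(θ − θ₁)) dθ = 1`,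
independently of `ρ`. -/
theorem poisson_kernel_integral_eq_one
    (ρ : ℝ) (hρ0 : 0 ≤ ρ) (hρ1 : ρ < 1) (θ₁ : ℝ) :
    (1 / (2 * Real.pi)) *
      ∫ θ in (-Real.pi)..Real.pi,
        (1 - ρ ^ 2) / ((ρ ^ 2 + 1) - 2 * ρ * Real.cos (θ - θ₁)) = 1 := by
  have hD : ∀ x : ℝ, (0:ℝ) < (ρ ^ 2 + 1) - 2 * ρ * Real.cos x := by
    intro x
    nlinarith [Real.neg_one_le_cos x, Real.cos_le_one x]
  have hderiv : ∀ θ ∈ Set.uIcc (-Real.pi) Real.pi,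
      HasDerivAt (fun y => (y - θ₁) +
        2 * Real.arctan (ρ * Real.sin (y - θ₁) / (1 - ρ * Real.cos (y - θ₁))))
        ((1 - ρ ^ 2) / ((ρ ^ 2 + 1) - 2 * ρ * Real.cos (θ - θ₁))) θ := by
    intro θ _
    have h := (poisson_hasDerivAt ρ hρ0 hρ1 (θ - θ₁)).comp θ
      ((hasDerivAt_id θ).sub_const θ₁)
    simpa [Function.comp_def] using h
  have hcont : Continuous fun θ : ℝ =>
      (1 - ρ ^ 2) / ((ρ ^ 2 + 1) - 2 * ρ * Real.cos (θ - θ₁)) := by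
    apply continuous_const.div (by fun_prop)
    intro x
    exact ne_of_gt (hD _)
  rw [intervalIntegral.integral_eq_sub_of_hasDerivAt hderiv
    (hcont.intervalIntegrable _ _)]
  have h1 : Real.sin (Real.pi - θ₁) = Real.sin (-Real.pi - θ₁) := by
    simp [Real.sin_sub]
  have h2 : Real.cos (Real.pi - θ₁) = Real.cos (-Real.pi - θ₁) := by
    simp [Real.cos_sub]
  rw [h1, h2]
  have hpi : Real.pi ≠ 0 := Real.pi_ne_zero
  field_simp
  ring
end

section
/- Let γ : ℂ → ℂ be analytic on the open unit disk {z : |z| < 1}, let θ₁ be real, and suppose the radial limit lim_{r → 1⁻} γ(r·e^{iθ₁}) exists and equals L ∈ ℂ. Then lim_{ρ → 1⁻} (1/(2π)) · ∫_{-π}^{π} γ(ρ·e^{iθ}) · (1 − ρ²)/((ρ² + 1) − 2ρ·cos(θ − θ₁)) dθ = L. That is, in the limit ρ → 1 the Poisson kernel acts on boundary values of inner analytic functions as the Dirac delta centered at θ₁. -/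
open Complex Real Filter Topology intervalIntegral


private theorem abs_expI' (θ : ℝ) : ‖Complex.exp (θ*Complex.I)‖ = 1 := by
  simpa using Complex.norm_exp_ofReal_mul_I θ

private theorem cauchyA {f : ℂ → ℂ} {r : ℝ} (hr : 1 < r)
    (hf : DifferentiableOn ℂ f (Metric.ball 0 r)) {w : ℂ} (hw : ‖w‖ < 1) :
    ∫ θ in (0:ℝ)..(2*Real.pi), f (Complex.exp (θ*Complex.I)) * Complex.exp (θ*Complex.I)
       / (Complex.exp (θ*Complex.I) - w) = 2 * Real.pi * f w := by
  have hsub : Metric.closedBall (0:ℂ) 1 ⊆ Metric.ball 0 r := by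
    intro z hz
    simp only [Metric.mem_closedBall, Metric.mem_ball, dist_zero_right] at *
    linarith
  have hdc : DiffContOnCl ℂ f (Metric.ball (0:ℂ) 1) :=
    ⟨hf.mono (Metric.ball_subset_ball hr.le), (hf.continuousOn.mono hsub).mono
      (by rw [closure_ball (0:ℂ) one_ne_zero])⟩
  have key := hdc.circleIntegral_sub_inv_smul (w := w) (by simpa using hw)
  rw [circleIntegral] at key
  simp only [deriv_circleMap, smul_eq_mul] at key
  have hcm : ∀ θ : ℝ, circleMap 0 1 θ = Complex.exp (θ*Complex.I) := by
    intro θ; simp [circleMap, mul_comm]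
  have h2 : ∫ θ in (0:ℝ)..(2*Real.pi),
      Complex.I * (f (Complex.exp (θ*Complex.I)) * Complex.exp (θ*Complex.I)
       / (Complex.exp (θ*Complex.I) - w)) = 2 * Real.pi * Complex.I * f w := by
    rw [← key]
    apply intervalIntegral.integral_congr
    intro θ _
    simp only [hcm]
    ring
  rw [intervalIntegral.integral_const_mul] at h2
  have h3 := congrArg (fun z => Complex.I⁻¹ * z) h2
  rw [← mul_assoc, inv_mul_cancel₀ Complex.I_ne_zero, one_mul] at h3
  rw [h3, Complex.inv_I]
  ring_nf
  simp [Complex.I_sq]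

private theorem meanB {f : ℂ → ℂ} {r : ℝ} (hr : 1 < r)
    (hf : DifferentiableOn ℂ f (Metric.ball 0 r)) :
    ∫ θ in (0:ℝ)..(2*Real.pi), f (Complex.exp (θ*Complex.I)) = 2 * Real.pi * f 0 := by
  have h := cauchyA hr hf (w := 0) (by simp)
  rw [← h]
  apply intervalIntegral.integral_congr
  intro θ _
  simp only [sub_zero]
  rw [mul_div_assoc, div_self (Complex.exp_ne_zero _), mul_one]

private theorem kernelId {ζ z₀ : ℂ} (hζ : Complex.normSq ζ = 1) (h1 : ζ ≠ z₀)
    (h2 : 1 - (starRingEnd ℂ) z₀ * ζ ≠ 0) :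
    ((((1 - ‖z₀‖ ^ 2) / ‖ζ - z₀‖ ^ 2 : ℝ)) : ℂ)
      = ζ / (ζ - z₀) + (1 - (starRingEnd ℂ) z₀ * ζ)⁻¹ - 1 := by
  have hζ' : ζ * (starRingEnd ℂ) ζ = 1 := by
    rw [Complex.mul_conj]; exact_mod_cast congrArg Complex.ofReal hζ
  have hζ0 : ζ ≠ 0 := by
    intro h; rw [h] at hζ'; simp at hζ'
  have hconj : (starRingEnd ℂ) ζ = ζ⁻¹ := by
    field_simp
    linear_combination hζ'
  have e1 : ((‖z₀‖ ^ 2 : ℝ) : ℂ) = z₀ * (starRingEnd ℂ) z₀ := by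
    rw [Complex.mul_conj, Complex.sq_norm]
  have e2 : ((‖ζ - z₀‖ ^ 2 : ℝ) : ℂ) = (ζ - z₀) * (starRingEnd ℂ) (ζ - z₀) := by
    rw [Complex.mul_conj, Complex.sq_norm]
  have hne : ζ - z₀ ≠ 0 := sub_ne_zero.mpr h1
  have hne'' : ζ⁻¹ - (starRingEnd ℂ) z₀ ≠ 0 := by
    intro h
    apply h2
    have h' : ζ⁻¹ = (starRingEnd ℂ) z₀ := by linear_combination h
    rw [← h', inv_mul_cancel₀ hζ0, sub_self]
  rw [Complex.ofReal_div, Complex.ofReal_sub, Complex.ofReal_one, Complex.ofReal_pow,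
    Complex.ofReal_pow]
  rw [show ((‖z₀‖ : ℂ))^2 = ((‖z₀‖ ^2 : ℝ) : ℂ) by push_cast; ring,
    show ((‖ζ - z₀‖ : ℂ))^2 = ((‖ζ - z₀‖ ^2 : ℝ) : ℂ) by push_cast; ring,
    e1, e2, map_sub, hconj]
  rw [div_eq_iff (mul_ne_zero hne hne'')]
  field_simp
  ring

private theorem reproduce {f : ℂ → ℂ} {r : ℝ} (hr : 1 < r)
    (hf : DifferentiableOn ℂ f (Metric.ball 0 r)) {z₀ : ℂ}
    (hz : ‖z₀‖ < 1) :
    ∫ θ in (0:ℝ)..(2*Real.pi), f (Complex.exp (θ*Complex.I)) *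
        ((((1 - ‖z₀‖ ^ 2) / ‖Complex.exp (θ*Complex.I) - z₀‖ ^ 2 : ℝ)) : ℂ)
      = 2 * Real.pi * f z₀ := by
  have hne : ∀ θ : ℝ, Complex.exp (θ*Complex.I) ≠ z₀ := by
    intro θ h
    rw [← h, abs_expI'] at hz; exact lt_irrefl _ hz
  have h2 : ∀ ζ : ℂ, ‖z₀‖ * ‖ζ‖ < 1 →
      1 - (starRingEnd ℂ) z₀ * ζ ≠ 0 := by
    intro ζ hζ h
    have h1 : (starRingEnd ℂ) z₀ * ζ = 1 := by linear_combination -h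
    have h3 := congrArg norm h1
    rw [norm_mul, Complex.norm_conj, norm_one] at h3
    rw [h3] at hζ; exact lt_irrefl _ hζ
  have hc : Continuous fun θ : ℝ => Complex.exp (θ*Complex.I) := by fun_prop
  have hmem : ∀ θ : ℝ, Complex.exp (θ*Complex.I) ∈ Metric.ball (0:ℂ) r := by
    intro θ; simp [Metric.mem_ball, Complex.dist_eq, abs_expI', hr]
  have hfc : Continuous fun θ : ℝ => f (Complex.exp (θ*Complex.I)) :=
    hf.continuousOn.comp_continuous hc hmem
  have hA : IntervalIntegrable (fun θ : ℝ => f (Complex.exp (θ*Complex.I)) *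
      Complex.exp (θ*Complex.I) / (Complex.exp (θ*Complex.I) - z₀))
      MeasureTheory.volume 0 (2*Real.pi) :=
    (((hfc.mul hc).div (hc.sub continuous_const)
      (fun θ => sub_ne_zero.mpr (hne θ)))).intervalIntegrable _ _
  have hB : IntervalIntegrable (fun θ : ℝ => f (Complex.exp (θ*Complex.I)) *
      (1 - (starRingEnd ℂ) z₀ * Complex.exp (θ*Complex.I))⁻¹)
      MeasureTheory.volume 0 (2*Real.pi) :=
    (hfc.mul (((continuous_const.sub (continuous_const.mul hc))).inv₀
      (fun θ => h2 _ (by rw [abs_expI', mul_one]; exact hz)))).intervalIntegrable _ _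
  have hC : IntervalIntegrable (fun θ : ℝ => f (Complex.exp (θ*Complex.I)))
      MeasureTheory.volume 0 (2*Real.pi) := hfc.intervalIntegrable _ _
  have hsplit : ∫ θ in (0:ℝ)..(2*Real.pi), f (Complex.exp (θ*Complex.I)) *
        ((((1 - ‖z₀‖ ^ 2) / ‖Complex.exp (θ*Complex.I) - z₀‖ ^ 2 : ℝ)) : ℂ)
      = (∫ θ in (0:ℝ)..(2*Real.pi), f (Complex.exp (θ*Complex.I)) *
          Complex.exp (θ*Complex.I) / (Complex.exp (θ*Complex.I) - z₀))
        + (∫ θ in (0:ℝ)..(2*Real.pi), f (Complex.exp (θ*Complex.I)) *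
          (1 - (starRingEnd ℂ) z₀ * Complex.exp (θ*Complex.I))⁻¹)
        - ∫ θ in (0:ℝ)..(2*Real.pi), f (Complex.exp (θ*Complex.I)) := by
    rw [← intervalIntegral.integral_add hA hB, ← intervalIntegral.integral_sub (hA.add hB) hC]
    apply intervalIntegral.integral_congr
    intro θ _
    simp only
    rw [kernelId (by simp [Complex.normSq_eq_norm_sq, abs_expI']) (hne θ)
      (h2 _ (by rw [abs_expI', mul_one]; exact hz))]
    ring
  rw [hsplit, cauchyA hr hf hz]
  -- second integral equals 2π f 0 via g
  set a := ‖z₀‖ with ha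
  have ha0 : 0 ≤ a := norm_nonneg z₀
  have hr' : (1:ℝ) < min r (2/(1+a)) := by
    apply lt_min hr
    rw [lt_div_iff₀ (by linarith)]
    linarith
  have hg : DifferentiableOn ℂ (fun ζ : ℂ => f ζ * (1 - (starRingEnd ℂ) z₀ * ζ)⁻¹)
      (Metric.ball 0 (min r (2/(1+a)))) := by
    apply DifferentiableOn.mul (hf.mono (Metric.ball_subset_ball (min_le_left _ _)))
    apply DifferentiableOn.inv
    · fun_prop
    · intro ζ hζ
      apply h2
      simp only [Metric.mem_ball, Complex.dist_eq, sub_zero] at hζ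
      have hζ2 : ‖ζ‖ < 2/(1+a) := lt_of_lt_of_le hζ (min_le_right _ _)
      have h4 : ‖ζ‖ * (1+a) < 2 := (lt_div_iff₀ (by linarith)).mp hζ2
      nlinarith [norm_nonneg ζ]
  have hI2 := meanB hr' hg
  simp only [mul_zero, sub_zero, inv_one, mul_one] at hI2
  rw [hI2, meanB hr hf]
  ring

private theorem kernel_eq (θ θ₁ : ℝ) {ρ : ℝ} (hρ0 : 0 < ρ) :
    ((1 - ρ ^ 2) / ((ρ ^ 2 + 1) - 2 * ρ * Real.cos (θ - θ₁)) : ℝ)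
      = (1 - ‖(ρ:ℂ) * Complex.exp (θ₁*Complex.I)‖ ^ 2)
        / ‖Complex.exp (θ*Complex.I) - (ρ:ℂ) * Complex.exp (θ₁*Complex.I)‖ ^ 2 := by
  have habs : ‖(ρ:ℂ) * Complex.exp (θ₁*Complex.I)‖ = ρ := by
    rw [norm_mul, abs_expI', mul_one, Complex.norm_real, Real.norm_eq_abs, abs_of_pos hρ0]
  rw [habs]
  congr 1
  rw [Complex.sq_norm, Complex.normSq_sub]
  simp only [Complex.normSq_eq_norm_sq, abs_expI', habs, one_pow]
  rw [show ((ρ:ℂ) * Complex.exp (θ₁*Complex.I)) = Complex.exp (θ₁*Complex.I) * ρ by ring]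
  rw [map_mul, Complex.conj_ofReal, ← Complex.exp_conj]
  have hconjarg : (starRingEnd ℂ) ((θ₁:ℂ)*Complex.I) = -(θ₁ * Complex.I) := by
    rw [map_mul, Complex.conj_ofReal, Complex.conj_I]; ring
  rw [hconjarg]
  have h5 : (ρ:ℂ) * Complex.exp (-((θ₁:ℂ)*Complex.I)) * Complex.exp ((θ:ℂ)*Complex.I)
      = (ρ:ℂ) * Complex.exp (((θ - θ₁:ℝ):ℂ) * Complex.I) := by
    rw [mul_assoc, ← Complex.exp_add]; congr 2; push_cast; ring
  rw [show Complex.exp ((θ:ℂ)*Complex.I) * (Complex.exp (-((θ₁:ℂ)*Complex.I)) * (ρ:ℂ)) = (ρ:ℂ) * Complex.exp (-((θ₁:ℂ)*Complex.I)) * Complex.exp ((θ:ℂ)*Complex.I) by ring]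
  rw [h5, Complex.re_ofReal_mul, Complex.exp_ofReal_mul_I_re]
  ring

/-- The Poisson kernel acts as a Dirac delta on boundary values of analytic functions:
if `γ` is analytic on the open unit disk and the radial limit of `γ` at `e^{iθ₁}`
exists and equals `L`, then the Poisson integrals of `γ` at radius `ρ`, centered at
`θ₁`, tend to `L` as `ρ → 1⁻` (within `(0,1)`). -/
theorem poisson_integral_tendsto_radial_limit
    (γ : ℂ → ℂ)
    (hγ : DifferentiableOn ℂ γ (Metric.ball (0 : ℂ) 1))
    (θ₁ : ℝ) (L : ℂ)
    (hL : Tendsto (fun r : ℝ => γ ((r : ℂ) * Complex.exp (θ₁ * Complex.I)))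
      (nhdsWithin 1 (Set.Ioo (0 : ℝ) 1)) (nhds L)) :
    Tendsto (fun ρ : ℝ =>
        ((1 / (2 * Real.pi) : ℝ) : ℂ) *
          ∫ θ in (-Real.pi)..Real.pi,
            γ ((ρ : ℂ) * Complex.exp (θ * Complex.I)) *
              (((1 - ρ ^ 2) / ((ρ ^ 2 + 1) - 2 * ρ * Real.cos (θ - θ₁)) : ℝ) : ℂ))
      (nhdsWithin 1 (Set.Ioo (0 : ℝ) 1)) (nhds L) := by
  -- key pointwise evaluation
  have key : ∀ ρ : ℝ, ρ ∈ Set.Ioo (0:ℝ) 1 →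
      ((1 / (2 * Real.pi) : ℝ) : ℂ) *
          ∫ θ in (-Real.pi)..Real.pi,
            γ ((ρ : ℂ) * Complex.exp (θ * Complex.I)) *
              (((1 - ρ ^ 2) / ((ρ ^ 2 + 1) - 2 * ρ * Real.cos (θ - θ₁)) : ℝ) : ℂ)
        = γ (((ρ^2 : ℝ) : ℂ) * Complex.exp (θ₁ * Complex.I)) := by
    intro ρ hρ
    obtain ⟨hρ0, hρ1⟩ := hρ
    set F : ℝ → ℂ := fun θ => γ ((ρ : ℂ) * Complex.exp (θ * Complex.I)) *
              (((1 - ρ ^ 2) / ((ρ ^ 2 + 1) - 2 * ρ * Real.cos (θ - θ₁)) : ℝ) : ℂ) with hF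
    have hper : Function.Periodic F (2*Real.pi) := by
      intro θ
      simp only [hF]
      have h1 : ((θ + 2*Real.pi : ℝ) : ℂ) * Complex.I = θ * Complex.I + 2*Real.pi*Complex.I := by
        push_cast; ring
      rw [h1, Complex.exp_add, Complex.exp_two_pi_mul_I, mul_one,
        show θ + 2*Real.pi - θ₁ = (θ - θ₁) + 2*Real.pi by ring, Real.cos_add_two_pi]
    have hshift := hper.intervalIntegral_add_eq (-Real.pi) 0
    rw [show -Real.pi + 2*Real.pi = Real.pi by ring, zero_add] at hshift
    -- apply reproduce
    have hrinv : 1 < ρ⁻¹ := (one_lt_inv₀ hρ0).mpr hρ1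
    have hdiff : DifferentiableOn ℂ (fun z : ℂ => γ ((ρ:ℂ) * z)) (Metric.ball 0 ρ⁻¹) := by
      apply DifferentiableOn.comp hγ (by fun_prop)
      intro z hz
      simp only [Metric.mem_ball, Complex.dist_eq, sub_zero] at *
      rw [norm_mul, Complex.norm_real, Real.norm_eq_abs, abs_of_pos hρ0]
      calc ρ * ‖z‖ < ρ * ρ⁻¹ := by
            exact mul_lt_mul_of_pos_left hz hρ0
        _ = 1 := mul_inv_cancel₀ (ne_of_gt hρ0)
    have hz0 : ‖(ρ:ℂ) * Complex.exp (θ₁*Complex.I)‖ < 1 := by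
      rw [norm_mul, abs_expI', mul_one, Complex.norm_real, Real.norm_eq_abs, abs_of_pos hρ0]; exact hρ1
    have hrep := reproduce hrinv hdiff hz0
    have hcongr : ∫ θ in (0:ℝ)..(2*Real.pi), F θ
        = ∫ θ in (0:ℝ)..(2*Real.pi), (fun z : ℂ => γ ((ρ:ℂ) * z)) (Complex.exp (θ*Complex.I)) *
        ((((1 - ‖(ρ:ℂ) * Complex.exp (θ₁*Complex.I)‖ ^ 2)
           / ‖Complex.exp (θ*Complex.I) - (ρ:ℂ) * Complex.exp (θ₁*Complex.I)‖ ^ 2 : ℝ)) : ℂ) := by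
      apply intervalIntegral.integral_congr
      intro θ _
      simp only [hF]
      rw [← kernel_eq θ θ₁ hρ0]
    rw [hF] at hshift
    rw [hshift, hcongr, hrep]
    rw [show ((ρ:ℂ) * ((ρ:ℂ) * Complex.exp ((θ₁:ℂ)*Complex.I))) = ((ρ^2 : ℝ) : ℂ) * Complex.exp ((θ₁:ℂ)*Complex.I) by push_cast; ring]
    have hπ : (Real.pi : ℂ) ≠ 0 := Complex.ofReal_ne_zero.mpr Real.pi_ne_zero
    push_cast
    field_simp
  -- squared map tendsto
  have hsq : Tendsto (fun ρ : ℝ => ρ^2) (nhdsWithin 1 (Set.Ioo (0:ℝ) 1))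
      (nhdsWithin 1 (Set.Ioo (0:ℝ) 1)) := by
    apply tendsto_nhdsWithin_of_tendsto_nhds_of_eventually_within
    · have : Tendsto (fun ρ : ℝ => ρ^2) (nhds 1) (nhds 1) := by
        simpa using (continuous_pow 2).tendsto (1:ℝ)
      exact this.mono_left nhdsWithin_le_nhds
    · filter_upwards [self_mem_nhdsWithin] with ρ hρ
      obtain ⟨h0, h1⟩ := hρ
      exact ⟨by positivity, by nlinarith⟩
  have := hL.comp hsq
  apply this.congr'
  filter_upwards [self_mem_nhdsWithin] with ρ hρ
  rw [key ρ hρ]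
  rfl
end

section
/- Let a : ℕ → ℝ. Suppose there exist a real ρ > 1 and a real θ₀ such that both real series Σ_{k=1}^∞ a_k·ρ^k·cos(kθ₀) and Σ_{k=1}^∞ a_k·ρ^k·sin(kθ₀) converge. Then Σ_{k=1}^∞ |a_k| < ∞, and the functions θ ↦ Σ_{k=1}^∞ a_k·cos(kθ) and θ ↦ Σ_{k=1}^∞ a_k·sin(kθ) are well-defined and infinitely differentiable (C^∞) on all of ℝ. -/
open Real Filter Topology

section aux
private lemma deriv_mul_cos' (a c : ℝ) :
    deriv (fun θ : ℝ => a * Real.cos (c * θ)) = fun θ => (-(a * c)) * Real.sin (c * θ) := by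
  funext x
  have h1 : HasDerivAt (fun θ : ℝ => c * θ) c x := by
    simpa using (hasDerivAt_id x).const_mul c
  have h2 : HasDerivAt (fun θ : ℝ => Real.cos (c * θ)) (-Real.sin (c * x) * c) x :=
    (Real.hasDerivAt_cos (c * x)).comp x h1
  have h3 := (h2.const_mul a).deriv
  rw [h3]; ring

private lemma deriv_mul_sin' (a c : ℝ) :
    deriv (fun θ : ℝ => a * Real.sin (c * θ)) = fun θ => (a * c) * Real.cos (c * θ) := by
  funext x
  have h1 : HasDerivAt (fun θ : ℝ => c * θ) c x := by
    simpa using (hasDerivAt_id x).const_mul c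
  have h2 : HasDerivAt (fun θ : ℝ => Real.sin (c * θ)) (Real.cos (c * x) * c) x :=
    (Real.hasDerivAt_sin (c * x)).comp x h1
  have h3 := (h2.const_mul a).deriv
  rw [h3]; ring

private lemma iter_bound' (n : ℕ) : ∀ (a c x : ℝ),
    |iteratedDeriv n (fun θ : ℝ => a * Real.cos (c * θ)) x| ≤ |a| * |c| ^ n ∧
    |iteratedDeriv n (fun θ : ℝ => a * Real.sin (c * θ)) x| ≤ |a| * |c| ^ n := by
  induction n with
  | zero =>
    intro a c x
    simp only [iteratedDeriv_zero, pow_zero, mul_one]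
    constructor
    · calc |a * Real.cos (c * x)| = |a| * |Real.cos (c * x)| := abs_mul _ _
        _ ≤ |a| * 1 := by gcongr; exact Real.abs_cos_le_one _
        _ = |a| := mul_one _
    · calc |a * Real.sin (c * x)| = |a| * |Real.sin (c * x)| := abs_mul _ _
        _ ≤ |a| * 1 := by gcongr; exact Real.abs_sin_le_one _
        _ = |a| := mul_one _
  | succ n ih =>
    intro a c x
    constructor
    · rw [iteratedDeriv_succ', deriv_mul_cos']
      calc |iteratedDeriv n (fun θ => (-(a * c)) * Real.sin (c * θ)) x|
          ≤ |(-(a * c))| * |c| ^ n := (ih _ c x).2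
        _ = |a| * |c| ^ (n + 1) := by rw [abs_neg, abs_mul, pow_succ]; ring
    · rw [iteratedDeriv_succ', deriv_mul_sin']
      calc |iteratedDeriv n (fun θ => (a * c) * Real.cos (c * θ)) x|
          ≤ |a * c| * |c| ^ n := (ih _ c x).1
        _ = |a| * |c| ^ (n + 1) := by rw [abs_mul, pow_succ]; ring
end aux


/-- Strong-convergence test: if both extended series `Σ a_k ρ^k cos(kθ₀)` and
`Σ a_k ρ^k sin(kθ₀)` converge at a single point with `ρ > 1`, then `Σ |a_k| < ∞`
and the trigonometric series `Σ a_k cos(kθ)` and `Σ a_k sin(kθ)` are well-defined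
(convergent) and `C^∞` on all of `ℝ`. -/
theorem strong_convergence_test
    (a : ℕ → ℝ) (ρ : ℝ) (hρ : 1 < ρ) (θ₀ : ℝ)
    (hc : ∃ S : ℝ, Tendsto
      (fun n : ℕ => ∑ k ∈ Finset.range n, a (k + 1) * ρ ^ (k + 1) * Real.cos ((k + 1) * θ₀))
      atTop (nhds S))
    (hs : ∃ S : ℝ, Tendsto
      (fun n : ℕ => ∑ k ∈ Finset.range n, a (k + 1) * ρ ^ (k + 1) * Real.sin ((k + 1) * θ₀))
      atTop (nhds S)) :
    Summable (fun k : ℕ => |a (k + 1)|) ∧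
    (∀ θ : ℝ, Summable (fun k : ℕ => a (k + 1) * Real.cos ((k + 1) * θ))) ∧
    (∀ θ : ℝ, Summable (fun k : ℕ => a (k + 1) * Real.sin ((k + 1) * θ))) ∧
    ContDiff ℝ (⊤ : ℕ∞)
      (fun θ : ℝ => ∑' k : ℕ, a (k + 1) * Real.cos ((k + 1) * θ)) ∧
    ContDiff ℝ (⊤ : ℕ∞)
      (fun θ : ℝ => ∑' k : ℕ, a (k + 1) * Real.sin ((k + 1) * θ)) := by
  have hρ0 : (0:ℝ) < ρ := lt_trans one_pos hρ
  -- terms of a convergent series tend to 0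
  obtain ⟨Sc, hSc⟩ := hc
  obtain ⟨Ss, hSs⟩ := hs
  have htc : Tendsto (fun k : ℕ => a (k + 1) * ρ ^ (k + 1) * Real.cos ((k + 1) * θ₀))
      atTop (nhds 0) := by
    have := (hSc.comp (tendsto_add_atTop_nat 1)).sub hSc
    simp only [Function.comp] at this
    have heq : ∀ n : ℕ, (∑ k ∈ Finset.range (n + 1),
        a (k + 1) * ρ ^ (k + 1) * Real.cos ((k + 1) * θ₀)) -
        (∑ k ∈ Finset.range n, a (k + 1) * ρ ^ (k + 1) * Real.cos ((k + 1) * θ₀)) =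
        a (n + 1) * ρ ^ (n + 1) * Real.cos ((n + 1) * θ₀) := by
      intro n; rw [Finset.sum_range_succ]; ring
    simpa [heq, sub_self] using this
  have hts : Tendsto (fun k : ℕ => a (k + 1) * ρ ^ (k + 1) * Real.sin ((k + 1) * θ₀))
      atTop (nhds 0) := by
    have := (hSs.comp (tendsto_add_atTop_nat 1)).sub hSs
    simp only [Function.comp] at this
    have heq : ∀ n : ℕ, (∑ k ∈ Finset.range (n + 1),
        a (k + 1) * ρ ^ (k + 1) * Real.sin ((k + 1) * θ₀)) -
        (∑ k ∈ Finset.range n, a (k + 1) * ρ ^ (k + 1) * Real.sin ((k + 1) * θ₀)) =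
        a (n + 1) * ρ ^ (n + 1) * Real.sin ((n + 1) * θ₀) := by
      intro n; rw [Finset.sum_range_succ]; ring
    simpa [heq, sub_self] using this
  -- so b k = a(k+1) ρ^(k+1) tends to 0
  set b : ℕ → ℝ := fun k => a (k + 1) * ρ ^ (k + 1) with hb
  have hb2 : Tendsto (fun k => (b k) ^ 2) atTop (nhds 0) := by
    have h := (htc.mul htc).add (hts.mul hts)
    have heq : ∀ k : ℕ,
        (a (k + 1) * ρ ^ (k + 1) * Real.cos ((k + 1) * θ₀)) *
          (a (k + 1) * ρ ^ (k + 1) * Real.cos ((k + 1) * θ₀)) +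
        (a (k + 1) * ρ ^ (k + 1) * Real.sin ((k + 1) * θ₀)) *
          (a (k + 1) * ρ ^ (k + 1) * Real.sin ((k + 1) * θ₀)) = (b k) ^ 2 := by
      intro k
      have h1 := Real.sin_sq_add_cos_sq ((k + 1) * θ₀)
      calc (a (k + 1) * ρ ^ (k + 1) * Real.cos ((k + 1) * θ₀)) *
          (a (k + 1) * ρ ^ (k + 1) * Real.cos ((k + 1) * θ₀)) +
        (a (k + 1) * ρ ^ (k + 1) * Real.sin ((k + 1) * θ₀)) *
          (a (k + 1) * ρ ^ (k + 1) * Real.sin ((k + 1) * θ₀))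
          = (b k) ^ 2 * (Real.sin ((k + 1) * θ₀) ^ 2 + Real.cos ((k + 1) * θ₀) ^ 2) := by
            simp only [hb]; ring
        _ = (b k) ^ 2 := by rw [h1, mul_one]
    simpa [heq] using h
  have hb0 : Tendsto (fun k => |b k|) atTop (nhds 0) := by
    have := hb2.sqrt
    simpa [Real.sqrt_sq_eq_abs] using this
  obtain ⟨C, hC⟩ := hb0.bddAbove_range
  have hCb : ∀ k, |b k| ≤ C := fun k => hC (Set.mem_range_self k)
  have hC0 : 0 ≤ C := le_trans (abs_nonneg _) (hCb 0)
  -- key bound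
  have hkey : ∀ k : ℕ, |a (k + 1)| ≤ C * (1 / ρ) ^ (k + 1) := by
    intro k
    have hpow : (0:ℝ) < ρ ^ (k + 1) := pow_pos hρ0 _
    have : |a (k + 1)| * ρ ^ (k + 1) ≤ C := by
      have := hCb k
      rwa [hb, abs_mul, abs_of_pos hpow] at this
    have h2 : (1/ρ) ^ (k+1) = (ρ ^ (k+1))⁻¹ := by rw [one_div, inv_pow]
    rw [h2, ← div_eq_mul_inv]
    exact (le_div_iff₀ hpow).mpr this
  have hr1 : |1 / ρ| < 1 := by
    rw [abs_of_pos (by positivity)]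
    rw [div_lt_one hρ0]; linarith
  -- summability of Σ |a(k+1)|
  have hsum_abs : Summable (fun k : ℕ => |a (k + 1)|) := by
    apply Summable.of_nonneg_of_le (fun k => abs_nonneg _) hkey
    exact (((summable_geometric_of_lt_one (by positivity) (by rw [div_lt_one hρ0]; linarith)).mul_left C).comp_injective (add_left_injective 1))
  -- summability with polynomial weights, for derivative bounds
  have hsum_pow : ∀ m : ℕ, Summable (fun k : ℕ => |a (k + 1)| * ((k:ℝ) + 1) ^ m) := by
    intro m
    have hmaj : Summable (fun k : ℕ => C * (((k:ℝ)+1) ^ m * (1/ρ) ^ (k+1))) := by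
      apply Summable.mul_left
      have h := summable_pow_mul_geometric_of_norm_lt_one m (r := 1/ρ) hr1
      have h2 := (summable_nat_add_iff 1).mpr h
      simpa [Nat.cast_add] using h2
    apply Summable.of_nonneg_of_le (fun k => by positivity) _ hmaj
    intro k
    have := hkey k
    calc |a (k + 1)| * ((k:ℝ) + 1) ^ m ≤ (C * (1/ρ) ^ (k+1)) * ((k:ℝ)+1) ^ m := by
          gcongr
      _ = C * (((k:ℝ)+1) ^ m * (1/ρ) ^ (k+1)) := by ring
  refine ⟨hsum_abs, ?_, ?_, ?_, ?_⟩
  · intro θ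
    apply Summable.of_abs
    apply Summable.of_nonneg_of_le (fun k => abs_nonneg _) _ hsum_abs
    intro k
    rw [abs_mul]
    calc |a (k+1)| * |Real.cos ((k+1) * θ)| ≤ |a (k+1)| * 1 := by
          gcongr; exact Real.abs_cos_le_one _
      _ = |a (k+1)| := mul_one _
  · intro θ
    apply Summable.of_abs
    apply Summable.of_nonneg_of_le (fun k => abs_nonneg _) _ hsum_abs
    intro k
    rw [abs_mul]
    calc |a (k+1)| * |Real.sin ((k+1) * θ)| ≤ |a (k+1)| * 1 := by
          gcongr; exact Real.abs_sin_le_one _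
      _ = |a (k+1)| := mul_one _
  · apply contDiff_tsum (v := fun m k => |a (k + 1)| * ((k:ℝ) + 1) ^ m)
    · intro i
      have : (fun θ : ℝ => a (i + 1) * Real.cos ((i + 1) * θ)) =
          fun θ : ℝ => a (i + 1) * Real.cos (((i:ℝ) + 1) * θ) := by
        push_cast; rfl
      rw [this]
      exact contDiff_const.mul (Real.contDiff_cos.comp (contDiff_const.mul contDiff_id))
    · intro m _; exact hsum_pow m
    · intro m i x _
      have hfun : (fun θ : ℝ => a (i + 1) * Real.cos ((i + 1) * θ)) =
          fun θ : ℝ => a (i + 1) * Real.cos (((i:ℝ) + 1) * θ) := by push_cast; rfl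
      rw [hfun, norm_iteratedFDeriv_eq_norm_iteratedDeriv]
      have := (iter_bound' m (a (i + 1)) ((i:ℝ) + 1) x).1
      rw [Real.norm_eq_abs]
      calc |iteratedDeriv m (fun θ : ℝ => a (i+1) * Real.cos (((i:ℝ)+1) * θ)) x|
          ≤ |a (i+1)| * |(i:ℝ)+1| ^ m := this
        _ = |a (i+1)| * ((i:ℝ)+1) ^ m := by
            rw [abs_of_pos (show (0:ℝ) < (i:ℝ)+1 by positivity)]
  · apply contDiff_tsum (v := fun m k => |a (k + 1)| * ((k:ℝ) + 1) ^ m)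
    · intro i
      have : (fun θ : ℝ => a (i + 1) * Real.sin ((i + 1) * θ)) =
          fun θ : ℝ => a (i + 1) * Real.sin (((i:ℝ) + 1) * θ) := by
        push_cast; rfl
      rw [this]
      exact contDiff_const.mul (Real.contDiff_sin.comp (contDiff_const.mul contDiff_id))
    · intro m _; exact hsum_pow m
    · intro m i x _
      have hfun : (fun θ : ℝ => a (i + 1) * Real.sin ((i + 1) * θ)) =
          fun θ : ℝ => a (i + 1) * Real.sin (((i:ℝ) + 1) * θ) := by push_cast; rfl
      rw [hfun, norm_iteratedFDeriv_eq_norm_iteratedDeriv]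
      have := (iter_bound' m (a (i + 1)) ((i:ℝ) + 1) x).2
      rw [Real.norm_eq_abs]
      calc |iteratedDeriv m (fun θ : ℝ => a (i+1) * Real.sin (((i:ℝ)+1) * θ)) x|
          ≤ |a (i+1)| * |(i:ℝ)+1| ^ m := this
        _ = |a (i+1)| * ((i:ℝ)+1) ^ m := by
            rw [abs_of_pos (show (0:ℝ) < (i:ℝ)+1 by positivity)]
end

section
/- For every real ρ with 0 ≤ ρ < 1 and every real θ, the series Σ_{k=1}^∞ (−1)^{k+1}·ρ^k·sin(kθ)/k converges, and its sum equals arctan( ρ·sin(θ) / (1 + ρ·cos(θ)) ). Equivalently, the imaginary part of the principal-branch logarithm log(1 + ρ·e^{iθ}) equals arctan( ρ·sin(θ) / (1 + ρ·cos(θ)) ), and it has the stated power-series expansion. -/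
open Complex Real Filter Topology

/-- For `0 ≤ ρ < 1` and real `θ`, the series `Σ_{k=1}^∞ (−1)^{k+1} ρ^k sin(kθ)/k`
converges to `arctan(ρ sin θ / (1 + ρ cos θ))`, which is also the imaginary part of
the principal-branch logarithm `log(1 + ρ e^{iθ})`. -/
theorem sawtooth_abel_sum
    (ρ : ℝ) (hρ0 : 0 ≤ ρ) (hρ1 : ρ < 1) (θ : ℝ) :
    HasSum (fun k : ℕ => (-1 : ℝ) ^ k * ρ ^ (k + 1) * Real.sin ((k + 1) * θ) / (k + 1))
      (Real.arctan (ρ * Real.sin θ / (1 + ρ * Real.cos θ))) ∧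
    (Complex.log (1 + (ρ : ℂ) * Complex.exp (θ * Complex.I))).im =
      Real.arctan (ρ * Real.sin θ / (1 + ρ * Real.cos θ)) := by
  set z : ℂ := (ρ : ℂ) * Complex.exp (θ * Complex.I) with hzdef
  have hznorm : ‖z‖ < 1 := by
    rw [hzdef]
    rw [norm_mul, Complex.norm_exp_ofReal_mul_I,
      Complex.norm_real, Real.norm_eq_abs, mul_one, _root_.abs_of_nonneg hρ0]
    exact hρ1
  have hz : z.re = ρ * Real.cos θ ∧ z.im = ρ * Real.sin θ := by
    rw [hzdef]
    simp [Complex.exp_mul_I, Complex.cos_ofReal_re, Complex.sin_ofReal_re]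
  have hre : 0 < (1 + z).re := by
    have : ρ * |Real.cos θ| < 1 := by
      calc ρ * |Real.cos θ| ≤ ρ * 1 := by
            exact mul_le_mul_of_nonneg_left (Real.abs_cos_le_one θ) hρ0
        _ = ρ := mul_one ρ
        _ < 1 := hρ1
    have h2 : |ρ * Real.cos θ| < 1 := by
      rwa [abs_mul, _root_.abs_of_nonneg hρ0]
    have := abs_lt.mp h2
    simp [Complex.add_re, hz.1]
    linarith [this.1]
  -- imaginary part of log
  have harg : (Complex.log (1 + z)).im =
      Real.arctan (ρ * Real.sin θ / (1 + ρ * Real.cos θ)) := by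
    rw [Complex.log_im]
    have hbound : |Complex.arg (1 + z)| < π / 2 := by
      rw [Complex.abs_arg_lt_pi_div_two_iff]
      exact Or.inl hre
    have habs := abs_lt.mp hbound
    have := Complex.tan_arg (1 + z)
    rw [← Real.arctan_tan (x := Complex.arg (1 + z)) habs.1 habs.2, this]
    congr 1
    simp [Complex.add_re, Complex.add_im, hz.1, hz.2]
  have hmain : HasSum (fun n : ℕ => ((-1 : ℂ) ^ (n + 1) * z ^ n / n).im)
      ((Complex.log (1 + z)).im) := by
    have := (Complex.hasSum_taylorSeries_log hznorm).mapL Complex.imCLM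
    simpa using this
  have hshift : HasSum (fun n : ℕ => ((-1 : ℂ) ^ (n + 1 + 1) * z ^ (n + 1) / ((n + 1 : ℕ) : ℂ)).im)
      ((Complex.log (1 + z)).im) :=
    (hasSum_nat_add_iff (f := fun n : ℕ => ((-1 : ℂ) ^ (n + 1) * z ^ n / n).im) 1).mpr
      (by simpa using hmain)
  have hterm : ∀ n : ℕ, ((-1 : ℂ) ^ (n + 1 + 1) * z ^ (n + 1) / ((n + 1 : ℕ) : ℂ)).im
      = (-1 : ℝ) ^ n * ρ ^ (n + 1) * Real.sin (((n : ℝ) + 1) * θ) / ((n : ℝ) + 1) := by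
    intro n
    have key : (-1 : ℂ) ^ (n + 1 + 1) * z ^ (n + 1) / ((n + 1 : ℕ) : ℂ)
        = ((((-1 : ℝ) ^ n * ρ ^ (n + 1) / ((n : ℝ) + 1) : ℝ)) : ℂ)
          * Complex.exp (((((n : ℝ) + 1) * θ : ℝ)) * Complex.I) := by
      rw [hzdef, mul_pow, ← Complex.exp_nat_mul]
      push_cast
      ring_nf
    rw [key, Complex.im_ofReal_mul, Complex.exp_ofReal_mul_I_im]
    ring
  rw [← harg]
  constructor
  · simpa only [hterm] using hshift
  · rfl
end

section
/- For every real ρ with 0 ≤ ρ < 1 and every real θ, the series Σ_{j=0}^∞ ρ^{2j+1}·sin((2j+1)θ)/(2j+1) converges with sum (1/2)·arctan( 2ρ·sin(θ) / (1 − ρ²) ). Moreover, for every θ with 0 < θ < π, lim_{ρ → 1⁻} Σ_{j=0}^∞ ρ^{2j+1}·sin((2j+1)θ)/(2j+1) = π/4, and for −π < θ < 0 this limit equals −π/4; thus the radial limit recovers the standard unit-amplitude square wave (up to the factor 4/π). -/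
open Real Filter Topology

private lemma arg_eq_arctan_aux {w : ℂ} (hw : 0 < w.re) :
    w.arg = Real.arctan (w.im / w.re) := by
  have h : |w.arg| < Real.pi / 2 := Complex.abs_arg_lt_pi_div_two_iff.mpr (Or.inl hw)
  rw [abs_lt] at h
  rw [← Complex.tan_arg w, Real.arctan_tan h.1 h.2]

private lemma odd_log_series {z : ℂ} (hz : ‖z‖ < 1) :
    HasSum (fun j : ℕ => z ^ (2 * j + 1) / ((2 * j + 1 : ℕ) : ℂ))
      ((1 / 2) * Complex.log ((1 + z) / (1 - z))) := by
  have h := (Complex.hasSum_arctan (z := -z * Complex.I) (by simpa using hz)).mul_left Complex.I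
  have e1 : ∀ j : ℕ, z ^ (2 * j + 1) / ((2 * j + 1 : ℕ) : ℂ)
      = Complex.I * ((-1) ^ j * (-z * Complex.I) ^ (2 * j + 1) / ((2 * j + 1 : ℕ) : ℂ)) := by
    intro j
    have hnum : Complex.I * ((-1 : ℂ) ^ j * (-z * Complex.I) ^ (2 * j + 1)) = z ^ (2 * j + 1) := by
      rw [show (-z * Complex.I) ^ (2 * j + 1) = ((-z * Complex.I) ^ 2) ^ j * (-z * Complex.I) by
        rw [← pow_mul, pow_succ]]
      rw [show (-z * Complex.I) ^ 2 = -z ^ 2 by rw [mul_pow, Complex.I_sq]; ring]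
      rw [show (-z ^ 2 : ℂ) ^ j = (-1) ^ j * (z ^ 2) ^ j from neg_pow _ _]
      rw [show Complex.I * ((-1 : ℂ) ^ j * ((-1 : ℂ) ^ j * (z ^ 2) ^ j * (-z * Complex.I))) =
        -(Complex.I * Complex.I) * (((-1 : ℂ) ^ j * (-1 : ℂ) ^ j) * ((z ^ 2) ^ j * z)) by ring]
      rw [Complex.I_mul_I, neg_neg, one_mul, ← pow_add,
        Even.neg_one_pow (n := j + j) ⟨j, rfl⟩, one_mul, ← pow_mul, ← pow_succ, two_mul]
    calc z ^ (2 * j + 1) / ((2 * j + 1 : ℕ) : ℂ)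
        = Complex.I * ((-1 : ℂ) ^ j * (-z * Complex.I) ^ (2 * j + 1)) / ((2 * j + 1 : ℕ) : ℂ) := by
          rw [hnum]
      _ = Complex.I * ((-1) ^ j * (-z * Complex.I) ^ (2 * j + 1) / ((2 * j + 1 : ℕ) : ℂ)) := by
          ring
  have e2 : Complex.I * Complex.arctan (-z * Complex.I)
      = (1 / 2) * Complex.log ((1 + z) / (1 - z)) := by
    rw [Complex.arctan]
    rw [show -z * Complex.I * Complex.I = -(Complex.I * Complex.I) * z by ring,
      Complex.I_mul_I, neg_neg, one_mul]
    rw [show Complex.I * (-Complex.I / 2 * Complex.log ((1 + z) / (1 - z)))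
      = -(Complex.I * Complex.I) / 2 * Complex.log ((1 + z) / (1 - z)) by ring,
      Complex.I_mul_I, neg_neg]
  rw [e2] at h
  exact h.congr_fun e1

private lemma square_wave_hasSum (ρ : ℝ) (h0 : 0 ≤ ρ) (h1 : ρ < 1) (θ : ℝ) :
    HasSum (fun j : ℕ => ρ ^ (2 * j + 1) * Real.sin ((2 * j + 1) * θ) / (2 * j + 1))
      ((1 / 2) * Real.arctan (2 * ρ * Real.sin θ / (1 - ρ ^ 2))) := by
  set z : ℂ := (ρ : ℂ) * Complex.exp ((θ : ℂ) * Complex.I) with hzdef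
  have hz : ‖z‖ < 1 := by
    rw [hzdef]
    rw [norm_mul, Complex.norm_real,
      Complex.norm_exp_ofReal_mul_I, mul_one, Real.norm_eq_abs, abs_of_nonneg h0]
    exact h1
  have key := Complex.hasSum_im (odd_log_series hz)
  -- identify the terms
  have hterm : ∀ j : ℕ, (z ^ (2 * j + 1) / ((2 * j + 1 : ℕ) : ℂ)).im
      = ρ ^ (2 * j + 1) * Real.sin ((2 * j + 1) * θ) / (2 * j + 1) := by
    intro j
    have hzpow : z ^ (2 * j + 1)
        = ((ρ ^ (2 * j + 1) : ℝ) : ℂ) *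
          Complex.exp ((((2 * j + 1 : ℕ) : ℝ) * θ : ℝ) * Complex.I) := by
      rw [hzdef, mul_pow, ← Complex.exp_nat_mul]
      push_cast
      ring_nf
    rw [hzpow]
    simp only [Complex.div_im, Complex.div_re, Complex.normSq_apply, Complex.mul_im,
      Complex.mul_re, Complex.ofReal_re, Complex.ofReal_im, Complex.natCast_re,
      Complex.natCast_im, Complex.exp_ofReal_mul_I_re, Complex.exp_ofReal_mul_I_im]
    push_cast
    have hm : (0 : ℝ) < 2 * (j : ℝ) + 1 := by positivity
    field_simp
    ring
  -- identify the sum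
  have hre : z.re = ρ * Real.cos θ := by
    simp [hzdef, Complex.mul_re, Complex.exp_ofReal_mul_I_re, Complex.exp_ofReal_mul_I_im]
  have him : z.im = ρ * Real.sin θ := by
    simp [hzdef, Complex.mul_im, Complex.exp_ofReal_mul_I_re, Complex.exp_ofReal_mul_I_im]
  set w : ℂ := (1 + z) / (1 - z) with hwdef
  have hnormsq : Complex.normSq (1 - z) = (1 - ρ * Real.cos θ) ^ 2 + (ρ * Real.sin θ) ^ 2 := by
    rw [Complex.normSq_apply]
    simp [hre, him]
    ring
  have hz1 : (1 : ℂ) - z ≠ 0 := by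
    intro h
    rw [sub_eq_zero] at h
    rw [← h] at hz
    simp at hz
  have hD : 0 < (1 - ρ * Real.cos θ) ^ 2 + (ρ * Real.sin θ) ^ 2 := by
    rw [← hnormsq]
    exact Complex.normSq_pos.mpr hz1
  have hρ2 : ρ ^ 2 < 1 := by nlinarith
  have hwre : w.re = (1 - ρ ^ 2) / ((1 - ρ * Real.cos θ) ^ 2 + (ρ * Real.sin θ) ^ 2) := by
    rw [hwdef, Complex.div_re, hnormsq]
    simp [hre, him]
    have hsc := Real.sin_sq_add_cos_sq θ
    field_simp
    congr 1
    linear_combination (-ρ ^ 2) * hsc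
  have hwim : w.im = 2 * ρ * Real.sin θ / ((1 - ρ * Real.cos θ) ^ 2 + (ρ * Real.sin θ) ^ 2) := by
    rw [hwdef, Complex.div_im, hnormsq]
    simp [hre, him]
    field_simp
    ring
  have hwrepos : 0 < w.re := by rw [hwre]; exact div_pos (by linarith) hD
  have harg : w.arg = Real.arctan (2 * ρ * Real.sin θ / (1 - ρ ^ 2)) := by
    rw [arg_eq_arctan_aux hwrepos, hwre, hwim]
    congr 1
    rw [div_div_div_cancel_right₀]
    exact hD.ne'
  have hsum : ((1 / 2 : ℂ) * Complex.log w).im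
      = (1 / 2) * Real.arctan (2 * ρ * Real.sin θ / (1 - ρ ^ 2)) := by
    rw [Complex.mul_im]
    simp [Complex.log_im, harg]
  rw [hsum] at key
  exact key.congr_fun fun j => (hterm j).symm

/-- The square-wave series: for `0 ≤ ρ < 1` and every real `θ`, the series
`Σ_{j=0}^∞ ρ^{2j+1} sin((2j+1)θ)/(2j+1)` converges with sum
`(1/2) arctan(2ρ sin θ / (1 − ρ²))`; moreover its radial limit as `ρ → 1⁻`
(within `(0,1)`) is `π/4` for `0 < θ < π` and `−π/4` for `−π < θ < 0`. -/
theorem square_wave_abel_sum_and_limit :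
    (∀ ρ : ℝ, 0 ≤ ρ → ρ < 1 → ∀ θ : ℝ,
      HasSum (fun j : ℕ => ρ ^ (2 * j + 1) * Real.sin ((2 * j + 1) * θ) / (2 * j + 1))
        ((1 / 2) * Real.arctan (2 * ρ * Real.sin θ / (1 - ρ ^ 2)))) ∧
    (∀ θ : ℝ, 0 < θ → θ < Real.pi →
      Tendsto (fun ρ : ℝ =>
          ∑' j : ℕ, ρ ^ (2 * j + 1) * Real.sin ((2 * j + 1) * θ) / (2 * j + 1))
        (nhdsWithin 1 (Set.Ioo (0 : ℝ) 1)) (nhds (Real.pi / 4))) ∧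
    (∀ θ : ℝ, -Real.pi < θ → θ < 0 →
      Tendsto (fun ρ : ℝ =>
          ∑' j : ℕ, ρ ^ (2 * j + 1) * Real.sin ((2 * j + 1) * θ) / (2 * j + 1))
        (nhdsWithin 1 (Set.Ioo (0 : ℝ) 1)) (nhds (-(Real.pi / 4)))) := by
  have hsum := square_wave_hasSum
  have heq : ∀ θ : ℝ, (fun ρ : ℝ => (1 / 2) * Real.arctan (2 * ρ * Real.sin θ / (1 - ρ ^ 2)))
      =ᶠ[nhdsWithin 1 (Set.Ioo (0 : ℝ) 1)]
      (fun ρ : ℝ => ∑' j : ℕ, ρ ^ (2 * j + 1) * Real.sin ((2 * j + 1) * θ) / (2 * j + 1)) := by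
    intro θ
    filter_upwards [self_mem_nhdsWithin] with ρ hρ
    exact ((hsum ρ hρ.1.le hρ.2 θ).tsum_eq).symm
  have hinv : Tendsto (fun ρ : ℝ => (1 - ρ ^ 2)⁻¹)
      (nhdsWithin 1 (Set.Ioo (0 : ℝ) 1)) atTop := by
    apply tendsto_inv_nhdsGT_zero.comp
    apply tendsto_nhdsWithin_of_tendsto_nhds_of_eventually_within
    · have : Tendsto (fun ρ : ℝ => 1 - ρ ^ 2) (nhds 1) (nhds (1 - 1 ^ 2)) :=
        (continuous_const.sub (continuous_pow 2)).tendsto 1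
      simpa using this.mono_left nhdsWithin_le_nhds
    · filter_upwards [self_mem_nhdsWithin] with ρ hρ
      have : ρ ^ 2 < 1 := by nlinarith [hρ.1, hρ.2]
      simp only [Set.mem_Ioi]
      linarith
  have hnum : ∀ θ : ℝ, Tendsto (fun ρ : ℝ => 2 * ρ * Real.sin θ)
      (nhdsWithin 1 (Set.Ioo (0 : ℝ) 1)) (nhds (2 * Real.sin θ)) := by
    intro θ
    have : Tendsto (fun ρ : ℝ => 2 * ρ * Real.sin θ) (nhds 1) (nhds (2 * 1 * Real.sin θ)) :=
      ((continuous_const.mul continuous_id).mul continuous_const).tendsto 1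
    rw [show (2 : ℝ) * 1 * Real.sin θ = 2 * Real.sin θ by ring] at this
    exact this.mono_left nhdsWithin_le_nhds
  have hdiv_eq : ∀ θ : ℝ, (fun ρ : ℝ => 2 * ρ * Real.sin θ / (1 - ρ ^ 2))
      = fun ρ : ℝ => (2 * ρ * Real.sin θ) * (1 - ρ ^ 2)⁻¹ := by
    intro θ; funext ρ; rw [div_eq_mul_inv]
  refine ⟨hsum, ?_, ?_⟩
  · intro θ hθ1 hθ2
    have hs : 0 < Real.sin θ := Real.sin_pos_of_pos_of_lt_pi hθ1 hθ2
    have harg : Tendsto (fun ρ : ℝ => 2 * ρ * Real.sin θ / (1 - ρ ^ 2))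
        (nhdsWithin 1 (Set.Ioo (0 : ℝ) 1)) atTop := by
      rw [hdiv_eq θ]
      exact (hnum θ).pos_mul_atTop (by linarith) hinv
    have harctan : Tendsto (fun ρ : ℝ => Real.arctan (2 * ρ * Real.sin θ / (1 - ρ ^ 2)))
        (nhdsWithin 1 (Set.Ioo (0 : ℝ) 1)) (nhds (Real.pi / 2)) :=
      (Real.tendsto_arctan_atTop.mono_right nhdsWithin_le_nhds).comp harg
    have := harctan.const_mul (1 / 2 : ℝ)
    rw [show (1 / 2 : ℝ) * (Real.pi / 2) = Real.pi / 4 by ring] at this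
    exact this.congr' (heq θ)
  · intro θ hθ1 hθ2
    have hs : Real.sin θ < 0 := Real.sin_neg_of_neg_of_neg_pi_lt hθ2 hθ1
    have harg : Tendsto (fun ρ : ℝ => 2 * ρ * Real.sin θ / (1 - ρ ^ 2))
        (nhdsWithin 1 (Set.Ioo (0 : ℝ) 1)) atBot := by
      rw [hdiv_eq θ]
      exact (hnum θ).neg_mul_atTop (by linarith) hinv
    have harctan : Tendsto (fun ρ : ℝ => Real.arctan (2 * ρ * Real.sin θ / (1 - ρ ^ 2)))
        (nhdsWithin 1 (Set.Ioo (0 : ℝ) 1)) (nhds (-(Real.pi / 2))) :=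
      (Real.tendsto_arctan_atBot.mono_right nhdsWithin_le_nhds).comp harg
    have := harctan.const_mul (1 / 2 : ℝ)
    rw [show (1 / 2 : ℝ) * (-(Real.pi / 2)) = -(Real.pi / 4) by ring] at this
    exact this.congr' (heq θ)
end
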